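/- For any r > 0 and any (γ, δ) ∈ ℝ² with D(γ, δ) ≥ 0, it holds that |δ| ≥ δ* where δ* = 3(1+r)√(3(r+2)r)/(r+2)². Equivalently, if |δ| < δ*, then D(γ,δ) < 0. -/
import Mathlib


noncomputable def D (r γ δ : ℝ) : ℝ :=
  δ^6*r^2 - 2*δ^4*(γ^2*(2 + 2*r - r^2) + (2*r^3 + 2*r^4 - r^2))
  - δ^2*(γ^4*(8 + 8*r - r^2) + (8*r^4 + 8*r^3 - r^2)
      - 2*γ^2*(10*r + 19*r^2 + 10*r^3))
  - 4*(1 + r)*(r + γ^2)^3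

set_option maxHeartbeats 1600000 in
lemma core_neg (r t s : ℝ) (hr : 0 < r) (ht : 0 ≤ t) (hs : 0 ≤ s)
    (hlt : s*(r+2)^3 < 27*r*(1+r)^2) :
    s^3*r^2 - 2*s^2*(t*(2 + 2*r - r^2) + (2*r^3 + 2*r^4 - r^2))
      - s*(t^2*(8 + 8*r - r^2) + (8*r^4 + 8*r^3 - r^2) - 2*t*(10*r + 19*r^2 + 10*r^3))
      - 4*(1 + r)*(r + t)^3 < 0 := by
  set x : ℝ := s + t + 1 with hx
  set A : ℝ := (r+2)*x - 2*(2*r+1)^2 with hA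
  set W : ℝ := 8*r*(r+2)^3*t + (r+2)^2*x^2 - 4*(r^2+r+1)*(r+2)*(2*r+1)*x + 4*(2*r+1)^3 with hW
  set e : ℝ := 27*r*(1+r)^2 - s*(r+2)^3 with he
  have he0 : 0 < e := by rw [he]; linarith
  have hr2 : (0:ℝ) ≤ r + 2 := by linarith
  have hxm : 0 < (r+2)*x - 2 := by
    rw [hx]
    nlinarith [mul_nonneg hr2 hs, mul_nonneg hr2 ht]
  have hB : 0 < (r+2)*x + 2*(14*r^2+14*r-1) := by
    rw [hx]
    nlinarith [mul_nonneg hr2 hs, mul_nonneg hr2 ht, sq_nonneg r]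
  have hC : 0 < 4*((r+2)*x) + (7*r-1)*(7*r+8) := by
    rw [hx]
    nlinarith [mul_nonneg hr2 hs, mul_nonneg hr2 ht, sq_nonneg r]
  have h16 : (0:ℝ) < 16*r*(r+2)^3 := by positivity
  have Id1 : 16*r*(r+2)^3 * (s^3*r^2 - 2*s^2*(t*(2 + 2*r - r^2) + (2*r^3 + 2*r^4 - r^2))
      - s*(t^2*(8 + 8*r - r^2) + (8*r^4 + 8*r^3 - r^2) - 2*t*(10*r + 19*r^2 + 10*r^3))
      - 4*(1 + r)*(r + t)^3) = ((r+2)*x-2)*A^3 - W^2 := by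
    rw [hA, hW, hx]; ring
  have Id3 : W - 8*r*e = A*((r+2)*x + 2*(14*r^2+14*r-1)) := by
    rw [hW, he, hA, hx]; ring
  have Id2 : (W - 8*r*e)^2 - ((r+2)*x-2)*A^3
      = 16*r*(r+1)*A^2*(4*((r+2)*x) + (7*r-1)*(7*r+8)) := by
    rw [hW, he, hA, hx]; ring
  have main : ((r+2)*x-2)*A^3 - W^2 < 0 := by
    rcases le_or_gt A 0 with hAneg | hApos
    · rcases hAneg.lt_or_eq with hA0 | hA0
      · have h3 : A^3 < 0 := Odd.pow_neg (by decide) hA0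
        have h1 : ((r+2)*x-2)*A^3 < 0 := mul_neg_of_pos_of_neg hxm h3
        have h2 : (0:ℝ) ≤ W^2 := sq_nonneg W
        linarith
      · have hAB : A*((r+2)*x + 2*(14*r^2+14*r-1)) = 0 := by rw [hA0, zero_mul]
        have hWe : W = 8*r*e := by
          have := Id3; rw [hAB] at this; linarith
        have hW0 : 0 < W := by
          rw [hWe]; positivity
        have h2 : 0 < W^2 := pow_pos hW0 2
        have h1 : ((r+2)*x-2)*A^3 = 0 := by rw [hA0]; ring
        linarith
    · have hWt : 0 < W - 8*r*e := by
        rw [Id3]; exact mul_pos hApos hB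
      have h8re : 0 < 8*r*e := by positivity
      have hWl : W - 8*r*e < W := by linarith
      have hWsq : (W - 8*r*e)^2 < W^2 :=
        pow_lt_pow_left₀ hWl hWt.le (by norm_num)
      have h2 : 0 ≤ 16*r*(r+1)*A^2*(4*((r+2)*x) + (7*r-1)*(7*r+8)) := by
        apply mul_nonneg _ hC.le
        have : (0:ℝ) ≤ 16*r*(r+1) := by positivity
        exact mul_nonneg this (sq_nonneg A)
      linarith [Id2]
  by_contra hge
  push_neg at hge
  have h0 : 0 ≤ 16*r*(r+2)^3 * (s^3*r^2 - 2*s^2*(t*(2 + 2*r - r^2) + (2*r^3 + 2*r^4 - r^2))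
      - s*(t^2*(8 + 8*r - r^2) + (8*r^4 + 8*r^3 - r^2) - 2*t*(10*r + 19*r^2 + 10*r^3))
      - 4*(1 + r)*(r + t)^3) := mul_nonneg h16.le hge
  rw [Id1] at h0
  linarith

theorem D_nonneg_implies_delta_large (r : ℝ) (hr : 0 < r)
    (δs : ℝ) (hδs : δs = 3*(1 + r) * Real.sqrt (3*(r + 2)*r) / (r + 2)^2) :
    (∀ γ δ : ℝ, 0 ≤ D r γ δ → δs ≤ |δ|) ∧
    (∀ γ δ : ℝ, |δ| < δs → D r γ δ < 0) := by
  have key : ∀ γ δ : ℝ, |δ| < δs → D r γ δ < 0 := by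
    intro γ δ hlt
    have ht : (0:ℝ) ≤ γ^2 := sq_nonneg γ
    have hs : (0:ℝ) ≤ δ^2 := sq_nonneg δ
    have hr2 : (0:ℝ) < r + 2 := by linarith
    have hsqrt : Real.sqrt (3*(r+2)*r) ^ 2 = 3*(r+2)*r :=
      Real.sq_sqrt (by positivity)
    have hδs2 : δs^2 = 27*r*(1+r)^2 / (r+2)^3 := by
      rw [hδs, div_pow, mul_pow, mul_pow, hsqrt]
      rw [div_eq_div_iff (by positivity) (by positivity)]
      ring
    have habs : δ^2 < δs^2 := by
      have h0 : (0:ℝ) ≤ |δ| := abs_nonneg δ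
      have h1 : δ^2 = |δ|^2 := (sq_abs δ).symm
      nlinarith
    have hlt' : δ^2*(r+2)^3 < 27*r*(1+r)^2 := by
      have h3 : (0:ℝ) < (r+2)^3 := by positivity
      have h4 := mul_lt_mul_of_pos_right habs h3
      rw [hδs2, div_mul_cancel₀] at h4
      · exact h4
      · positivity
    have hcore := core_neg r (γ^2) (δ^2) hr ht hs hlt'
    have hD : D r γ δ = (δ^2)^3*r^2 - 2*((δ^2))^2*(γ^2*(2 + 2*r - r^2) + (2*r^3 + 2*r^4 - r^2))
      - δ^2*((γ^2)^2*(8 + 8*r - r^2) + (8*r^4 + 8*r^3 - r^2) - 2*γ^2*(10*r + 19*r^2 + 10*r^3))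
      - 4*(1 + r)*(r + γ^2)^3 := by
      rw [D]; ring
    rw [hD]
    convert hcore using 2 <;> ring
  constructor
  · intro γ δ hD
    by_contra h
    push_neg at h
    exact absurd hD (not_le.mpr (key γ δ h))
  · exact key
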